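/- arXiv:2109.03874 — 3 statements merged into one kernel-verified Lean document; each statement's English description precedes it below -/
import Mathlib

section
/- Let X be an m×n matrix with nonnegative entries, W an m×r matrix with nonnegative entries, and H an r×n matrix with nonnegative entries such that (WᵀWH)_{bj} > 0 for all indices b, j. Define the updated matrix H⁺ by H⁺_{bj} = H_{bj} · (WᵀX)_{bj} / (WᵀWH)_{bj}. Then the squared Frobenius error does not increase: ‖X − W H⁺‖_F² ≤ ‖X − W H‖_F². -/
open Matrix BigOperators

private lemma expand_sq {m r : ℕ} (W : Matrix (Fin m) (Fin r) ℝ) (x : Fin m → ℝ)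
    (u : Fin r → ℝ) :
    ∑ i, (x i - ∑ b, W i b * u b) ^ 2
      = ∑ i, x i ^ 2 - 2 * ∑ b, (∑ i, W i b * x i) * u b
        + ∑ b, ∑ c, (∑ i, W i b * W i c) * u b * u c := by
  have h1 : ∀ i, (x i - ∑ b, W i b * u b) ^ 2
      = x i ^ 2 - 2 * ∑ b, (W i b * x i) * u b
        + ∑ b, ∑ c, (W i b * W i c) * u b * u c := by
    intro i
    have hs : (∑ b, W i b * u b) ^ 2 = ∑ b, ∑ c, (W i b * W i c) * u b * u c := by
      rw [sq, Finset.sum_mul_sum]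
      apply Finset.sum_congr rfl; intro b _
      apply Finset.sum_congr rfl; intro c _
      ring
    have h2 : ∑ b, (W i b * x i) * u b = x i * ∑ b, W i b * u b := by
      rw [Finset.mul_sum]
      apply Finset.sum_congr rfl; intro b _; ring
    rw [sub_sq, hs, h2]
    ring
  rw [Finset.sum_congr rfl (fun i _ => h1 i)]
  rw [Finset.sum_add_distrib, Finset.sum_sub_distrib]
  congr 1
  · congr 1
    rw [← Finset.mul_sum, Finset.sum_comm]
    congr 1
    apply Finset.sum_congr rfl; intro b _
    rw [Finset.sum_mul]
  · rw [Finset.sum_comm]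
    apply Finset.sum_congr rfl; intro b _
    rw [Finset.sum_comm]
    apply Finset.sum_congr rfl; intro c _
    rw [Finset.sum_mul, Finset.sum_mul]

private lemma quad_le {r : ℕ} (A : Matrix (Fin r) (Fin r) ℝ) (hA : ∀ b c, 0 ≤ A b c)
    (hsym : ∀ b c, A b c = A c b) (h t : Fin r → ℝ) (hh : ∀ b, 0 ≤ h b) :
    ∑ b, ∑ c, A b c * (h b * t b) * (h c * t c)
      ≤ ∑ b, (∑ c, A b c * h c) * h b * t b ^ 2 := by
  have key : ∑ b, ∑ c, A b c * (h b * t b) * (h c * t c)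
      ≤ ∑ b, ∑ c, A b c * h b * h c * ((t b ^ 2 + t c ^ 2) / 2) := by
    apply Finset.sum_le_sum; intro b _
    apply Finset.sum_le_sum; intro c _
    have h1 : t b * t c ≤ (t b ^ 2 + t c ^ 2) / 2 := by nlinarith [sq_nonneg (t b - t c)]
    have h2 : 0 ≤ A b c * h b * h c :=
      mul_nonneg (mul_nonneg (hA b c) (hh b)) (hh c)
    nlinarith [mul_le_mul_of_nonneg_left h1 h2]
  refine key.trans_eq ?_
  have split : ∑ b, ∑ c, A b c * h b * h c * ((t b ^ 2 + t c ^ 2) / 2)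
      = (∑ b, ∑ c, A b c * h b * h c * t b ^ 2) / 2
        + (∑ b, ∑ c, A b c * h b * h c * t c ^ 2) / 2 := by
    rw [Finset.sum_div, Finset.sum_div, ← Finset.sum_add_distrib]
    apply Finset.sum_congr rfl; intro b _
    rw [Finset.sum_div, Finset.sum_div, ← Finset.sum_add_distrib]
    apply Finset.sum_congr rfl; intro c _
    ring
  have swap : ∑ b, ∑ c, A b c * h b * h c * t c ^ 2
      = ∑ b, ∑ c, A b c * h b * h c * t b ^ 2 := by
    rw [Finset.sum_comm]
    apply Finset.sum_congr rfl; intro b _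
    apply Finset.sum_congr rfl; intro c _
    rw [hsym c b]; ring
  rw [split, swap]
  rw [← add_div, add_self_div_two]
  apply Finset.sum_congr rfl; intro b _
  rw [Finset.sum_mul, Finset.sum_mul]
  apply Finset.sum_congr rfl; intro c _
  ring

private lemma col_key {m r : ℕ} (W : Matrix (Fin m) (Fin r) ℝ) (x : Fin m → ℝ)
    (h hp : Fin r → ℝ) (hW : ∀ i a, 0 ≤ W i a) (hh : ∀ b, 0 ≤ h b)
    (hL : ∀ b, 0 < ∑ c, (∑ i, W i b * W i c) * h c)
    (hhp : ∀ b, hp b = h b * (∑ i, W i b * x i) / (∑ c, (∑ i, W i b * W i c) * h c)) :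
    ∑ i, (x i - ∑ b, W i b * hp b) ^ 2 ≤ ∑ i, (x i - ∑ b, W i b * h b) ^ 2 := by
  set A : Matrix (Fin r) (Fin r) ℝ := fun b c => ∑ i, W i b * W i c with hA
  set v : Fin r → ℝ := fun b => ∑ i, W i b * x i with hv
  set L : Fin r → ℝ := fun b => ∑ c, A b c * h c with hLdef
  set t : Fin r → ℝ := fun b => v b / L b with ht
  have hAnn : ∀ b c, 0 ≤ A b c := fun b c =>
    Finset.sum_nonneg fun i _ => mul_nonneg (hW i b) (hW i c)
  have hAsym : ∀ b c, A b c = A c b := by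
    intro b c
    apply Finset.sum_congr rfl; intro i _; ring
  have hpt : ∀ b, hp b = h b * t b := by
    intro b
    rw [hhp b, mul_div_assoc]
  -- the quadratic bound for hp
  have q1 : ∑ b, ∑ c, A b c * hp b * hp c ≤ ∑ b, L b * h b * t b ^ 2 := by
    have := quad_le A hAnn hAsym h t hh
    calc ∑ b, ∑ c, A b c * hp b * hp c
        = ∑ b, ∑ c, A b c * (h b * t b) * (h c * t c) := by
          apply Finset.sum_congr rfl; intro b _
          apply Finset.sum_congr rfl; intro c _
          rw [hpt b, hpt c]
      _ ≤ ∑ b, (∑ c, A b c * h c) * h b * t b ^ 2 := this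
      _ = ∑ b, L b * h b * t b ^ 2 := rfl
  -- identity for h
  have q2 : ∑ b, ∑ c, A b c * h b * h c = ∑ b, L b * h b := by
    apply Finset.sum_congr rfl; intro b _
    rw [hLdef, Finset.sum_mul]
    apply Finset.sum_congr rfl; intro c _
    ring
  -- per-index inequality
  have q3 : ∑ b, (L b * h b * t b ^ 2 + 2 * (v b * h b))
      ≤ ∑ b, (L b * h b + 2 * (v b * hp b)) := by
    apply Finset.sum_le_sum; intro b _
    have hLb := hL b
    have hvt : v b = t b * L b := by
      rw [ht]; exact (div_mul_cancel₀ (v b) hLb.ne').symm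
    rw [hpt b, hvt]
    have hhb := hh b
    nlinarith [sq_nonneg (1 - t b), mul_nonneg hhb hLb.le]
  rw [expand_sq, expand_sq]
  have e1 : ∑ b, (∑ i, W i b * x i) * hp b = ∑ b, v b * hp b := rfl
  have e2 : ∑ b, (∑ i, W i b * x i) * h b = ∑ b, v b * h b := rfl
  have e3 : ∑ b, ∑ c, (∑ i, W i b * W i c) * hp b * hp c
      = ∑ b, ∑ c, A b c * hp b * hp c := rfl
  have e4 : ∑ b, ∑ c, (∑ i, W i b * W i c) * h b * h c
      = ∑ b, ∑ c, A b c * h b * h c := rfl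
  rw [e1, e2, e3, e4, q2]
  have hs3 : ∑ b, (L b * h b * t b ^ 2 + 2 * (v b * h b))
      = (∑ b, L b * h b * t b ^ 2) + 2 * ∑ b, v b * h b := by
    rw [Finset.sum_add_distrib, Finset.mul_sum]
  have hs4 : ∑ b, (L b * h b + 2 * (v b * hp b))
      = (∑ b, L b * h b) + 2 * ∑ b, v b * hp b := by
    rw [Finset.sum_add_distrib, Finset.mul_sum]
  rw [hs3, hs4] at q3
  linarith

/-- Lee–Seung multiplicative update for `H` does not increase the squared
Frobenius error `‖X - W H‖_F²`. -/
theorem leeSeung_H_update_decreases_frobenius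
    {m n r : ℕ}
    (X : Matrix (Fin m) (Fin n) ℝ) (W : Matrix (Fin m) (Fin r) ℝ)
    (H Hplus : Matrix (Fin r) (Fin n) ℝ)
    (hX : ∀ i j, 0 ≤ X i j) (hW : ∀ i a, 0 ≤ W i a) (hH : ∀ b j, 0 ≤ H b j)
    (hpos : ∀ b j, 0 < (Wᵀ * W * H) b j)
    (hHplus : ∀ b j, Hplus b j = H b j * (Wᵀ * X) b j / ((Wᵀ * W * H) b j)) :
    ∑ i, ∑ j, (X i j - (W * Hplus) i j) ^ 2
      ≤ ∑ i, ∑ j, (X i j - (W * H) i j) ^ 2 := by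
  rw [Finset.sum_comm (s := Finset.univ) (t := Finset.univ)
      (f := fun i j => (X i j - (W * Hplus) i j) ^ 2),
    Finset.sum_comm (s := Finset.univ) (t := Finset.univ)
      (f := fun i j => (X i j - (W * H) i j) ^ 2)]
  apply Finset.sum_le_sum
  intro j _
  have hWtW : ∀ b, (Wᵀ * W * H) b j = ∑ c, (∑ i, W i b * W i c) * H c j := by
    intro b
    simp [Matrix.mul_apply]
  have hWtX : ∀ b, (Wᵀ * X) b j = ∑ i, W i b * X i j := by
    intro b
    simp [Matrix.mul_apply]
  have key := col_key W (fun i => X i j) (fun b => H b j) (fun b => Hplus b j)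
    hW (fun b => hH b j)
    (by intro b; rw [← hWtW b]; exact hpos b j)
    (by intro b; rw [← hWtW b, ← hWtX b]; exact hHplus b j)
  simpa [Matrix.mul_apply] using key
end

section
/- Let X be an m×n matrix with nonnegative entries, W an m×r matrix with nonnegative entries, and H an r×n matrix with nonnegative entries such that (WHHᵀ)_{ia} > 0 for all indices i, a. Define the updated matrix W⁺ by W⁺_{ia} = W_{ia} · (XHᵀ)_{ia} / (WHHᵀ)_{ia}. Then the squared Frobenius error does not increase: ‖X − W⁺ H‖_F² ≤ ‖X − W H‖_F². -/
open Matrix BigOperators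

/-- Quadratic form bound: for a symmetric nonnegative matrix `A` and
nonnegative weights `w`, the quadratic form at `w·u` is majorized by the
diagonal form. -/
lemma leeSeung_quad_bound {r : ℕ} (A : Fin r → Fin r → ℝ) (w u : Fin r → ℝ)
    (hA : ∀ a b, 0 ≤ A a b) (hsym : ∀ a b, A a b = A b a) (hw : ∀ a, 0 ≤ w a) :
    ∑ a, ∑ b, A a b * (w a * u a) * (w b * u b)
      ≤ ∑ a, (∑ b, A a b * w b) * w a * u a ^ 2 := by
  have step1 : ∑ a, ∑ b, A a b * (w a * u a) * (w b * u b)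
      ≤ ∑ a, ∑ b, A a b * w a * w b * ((u a ^ 2 + u b ^ 2) / 2) := by
    refine Finset.sum_le_sum fun a _ => Finset.sum_le_sum fun b _ => ?_
    have h1 : 0 ≤ A a b * w a * w b := by
      have := hA a b; have := hw a; have := hw b; positivity
    nlinarith [sq_nonneg (u a - u b), mul_nonneg h1 (sq_nonneg (u a - u b))]
  refine step1.trans_eq ?_
  have hsplit : ∑ a, ∑ b, A a b * w a * w b * ((u a ^ 2 + u b ^ 2) / 2)
      = (∑ a, ∑ b, A a b * w a * w b * u a ^ 2) / 2
        + (∑ a, ∑ b, A a b * w a * w b * u b ^ 2) / 2 := by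
    rw [Finset.sum_div, Finset.sum_div, ← Finset.sum_add_distrib]
    refine Finset.sum_congr rfl fun a _ => ?_
    rw [Finset.sum_div, Finset.sum_div, ← Finset.sum_add_distrib]
    exact Finset.sum_congr rfl fun b _ => by ring
  have hswap : (∑ a, ∑ b, A a b * w a * w b * u b ^ 2)
      = ∑ a, ∑ b, A a b * w a * w b * u a ^ 2 := by
    rw [Finset.sum_comm]
    refine Finset.sum_congr rfl fun a _ => Finset.sum_congr rfl fun b _ => ?_
    rw [hsym b a]; ring
  rw [hsplit, hswap]
  rw [← add_div, add_self_div_two]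
  refine Finset.sum_congr rfl fun a _ => ?_
  rw [Finset.sum_mul, Finset.sum_mul]
  exact Finset.sum_congr rfl fun b _ => by ring

/-- Lee–Seung multiplicative update for `W` does not increase the squared
Frobenius error `‖X - W H‖_F²`. -/
theorem leeSeung_W_update_decreases_frobenius
    {m n r : ℕ}
    (X : Matrix (Fin m) (Fin n) ℝ) (W Wplus : Matrix (Fin m) (Fin r) ℝ)
    (H : Matrix (Fin r) (Fin n) ℝ)
    (hX : ∀ i j, 0 ≤ X i j) (hW : ∀ i a, 0 ≤ W i a) (hH : ∀ b j, 0 ≤ H b j)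
    (hpos : ∀ i a, 0 < (W * H * Hᵀ) i a)
    (hWplus : ∀ i a, Wplus i a = W i a * (X * Hᵀ) i a / ((W * H * Hᵀ) i a)) :
    ∑ i, ∑ j, (X i j - (Wplus * H) i j) ^ 2
      ≤ ∑ i, ∑ j, (X i j - (W * H) i j) ^ 2 := by
  refine Finset.sum_le_sum fun i _ => ?_
  -- Row-wise data
  set w : Fin r → ℝ := fun a => W i a with hw_def
  set s : Fin r → ℝ := fun a => (W * H * Hᵀ) i a with hs_def
  set p : Fin r → ℝ := fun a => (X * Hᵀ) i a with hp_def
  set u : Fin r → ℝ := fun a => (p a - s a) / s a with hu_def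
  set d : Fin r → ℝ := fun a => w a * u a with hd_def
  have hs_pos : ∀ a, 0 < s a := fun a => hpos i a
  have hs_ne : ∀ a, s a ≠ 0 := fun a => (hs_pos a).ne'
  -- W⁺ row = w + d
  have hWp : ∀ a, Wplus i a = w a + d a := by
    intro a
    rw [hWplus i a]
    show w a * p a / s a = w a + w a * ((p a - s a) / s a)
    field_simp [hs_ne a]
    ring
  -- error and correction terms
  set e : Fin n → ℝ := fun j => X i j - (W * H) i j with he_def
  set δ : Fin n → ℝ := fun j => ∑ a, d a * H a j with hδ_def
  have hrow : ∀ j, (Wplus * H) i j = (W * H) i j + δ j := by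
    intro j
    rw [Matrix.mul_apply, Matrix.mul_apply]
    show ∑ a, Wplus i a * H a j = _
    rw [show (∑ a, Wplus i a * H a j) = ∑ a, (w a * H a j + d a * H a j) from
      Finset.sum_congr rfl fun a _ => by rw [hWp a]; ring]
    rw [Finset.sum_add_distrib]
  -- key identity: p a - s a = ∑ j, e j * H a j
  have hps : ∀ a, p a - s a = ∑ j, e j * H a j := by
    intro a
    show (X * Hᵀ) i a - (W * H * Hᵀ) i a = _
    rw [Matrix.mul_apply, Matrix.mul_apply, ← Finset.sum_sub_distrib]
    refine Finset.sum_congr rfl fun j _ => ?_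
    simp [Matrix.transpose_apply, he_def]
    ring
  -- s a = ∑ b, (∑ j, H a j * H b j) * w b
  have hsA : ∀ a, s a = ∑ b, (∑ j, H a j * H b j) * w b := by
    intro a
    show (W * H * Hᵀ) i a = _
    rw [Matrix.mul_assoc, Matrix.mul_apply]
    refine Finset.sum_congr rfl fun b _ => ?_
    rw [Matrix.mul_apply]
    simp only [Matrix.transpose_apply]
    show W i b * (∑ j, H b j * H a j) = (∑ j, H a j * H b j) * W i b
    rw [Finset.mul_sum, Finset.sum_mul]
    exact Finset.sum_congr rfl fun j _ => by ring
  -- cross term: ∑ j, e j * δ j = ∑ a, s a * w a * u a ^ 2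
  have hcross : ∑ j, e j * δ j = ∑ a, s a * w a * u a ^ 2 := by
    have h1 : ∀ j, e j * δ j = ∑ a, d a * (e j * H a j) := by
      intro j
      rw [hδ_def]
      show e j * ∑ a, d a * H a j = _
      rw [Finset.mul_sum]
      exact Finset.sum_congr rfl fun a _ => by ring
    calc ∑ j, e j * δ j = ∑ j, ∑ a, d a * (e j * H a j) :=
            Finset.sum_congr rfl fun j _ => h1 j
      _ = ∑ a, ∑ j, d a * (e j * H a j) := Finset.sum_comm
      _ = ∑ a, d a * (p a - s a) := by
            refine Finset.sum_congr rfl fun a _ => ?_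
            rw [hps a, Finset.mul_sum]
      _ = ∑ a, s a * w a * u a ^ 2 := by
            refine Finset.sum_congr rfl fun a _ => ?_
            have : p a - s a = s a * u a := by
              show p a - s a = s a * ((p a - s a) / s a)
              rw [mul_div_assoc', mul_comm, mul_div_assoc,
                div_self (hs_ne a), mul_one]
            rw [this, hd_def]
            ring
  -- quadratic term
  have hquad : ∑ j, δ j ^ 2 ≤ ∑ a, s a * w a * u a ^ 2 := by
    have hδ2 : ∑ j, δ j ^ 2
        = ∑ a, ∑ b, (∑ j, H a j * H b j) * (w a * u a) * (w b * u b) := by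
      have : ∀ j, δ j ^ 2 = ∑ a, ∑ b, (d a * H a j) * (d b * H b j) := by
        intro j
        rw [hδ_def]
        show (∑ a, d a * H a j) ^ 2 = _
        rw [sq, Finset.sum_mul_sum]
      rw [Finset.sum_congr rfl fun j _ => this j, Finset.sum_comm]
      refine Finset.sum_congr rfl fun a _ => ?_
      rw [Finset.sum_comm]
      refine Finset.sum_congr rfl fun b _ => ?_
      simp only [hd_def, Finset.sum_mul]
      exact Finset.sum_congr rfl fun j _ => by ring
    rw [hδ2]
    have := leeSeung_quad_bound (fun a b => ∑ j, H a j * H b j) w u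
      (fun a b => Finset.sum_nonneg fun j _ => mul_nonneg (hH a j) (hH b j))
      (fun a b => Finset.sum_congr rfl fun j _ => mul_comm _ _)
      (fun a => hW i a)
    refine this.trans_eq ?_
    refine Finset.sum_congr rfl fun a _ => ?_
    rw [← hsA a]
  -- assemble
  have hT : 0 ≤ ∑ a, s a * w a * u a ^ 2 :=
    Finset.sum_nonneg fun a _ => by
      have := (hs_pos a).le; have := hW i a; positivity
  have hexp : ∑ j, (X i j - (Wplus * H) i j) ^ 2
      = ∑ j, e j ^ 2 - 2 * (∑ j, e j * δ j) + ∑ j, δ j ^ 2 := by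
    rw [Finset.mul_sum, ← Finset.sum_sub_distrib, ← Finset.sum_add_distrib]
    refine Finset.sum_congr rfl fun j _ => ?_
    rw [hrow j]
    show (X i j - ((W * H) i j + δ j)) ^ 2 = _
    have : X i j - ((W * H) i j + δ j) = e j - δ j := by rw [he_def]; ring
    rw [this]
    ring
  rw [hexp, hcross]
  have : ∑ j, (X i j - (W * H) i j) ^ 2 = ∑ j, e j ^ 2 := rfl
  rw [this]
  linarith [hquad, hT]
end

section
/- Let X be an m×n matrix with strictly positive entries, W an m×r matrix with nonnegative entries whose columns are normalized so that Σ_i W_{ia} = 1 for every a, and H an r×n matrix with nonnegative entries such that (WH)_{ij} > 0 for all i, j. Define the updated matrix H⁺ by H⁺_{aj} = H_{aj} · Σ_i W_{ia} X_{ij}/(WH)_{ij}, and assume (WH⁺)_{ij} > 0 for all i, j. Then the generalized Kullback–Leibler divergence does not increase: KL(X; WH⁺) ≤ KL(X; WH). -/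
open Matrix BigOperators Real

lemma jensen_log {r : ℕ} (w t : Fin r → ℝ) (hw : ∀ a, 0 ≤ w a)
    (hw1 : ∑ a, w a = 1) (ht : ∀ a, 0 ≤ t a)
    (hwt : ∀ a, 0 < w a → 0 < t a) :
    ∑ a, w a * Real.log (t a) ≤ Real.log (∑ a, w a * t a) := by
  have hamgm := Real.geom_mean_le_arith_mean_weighted Finset.univ w t
    (fun a _ => hw a) hw1 (fun a _ => ht a)
  have hpos : ∀ a, 0 < t a ^ w a := by
    intro a
    rcases eq_or_lt_of_le (hw a) with h | h
    · rw [← h, Real.rpow_zero]; norm_num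
    · exact Real.rpow_pos_of_pos (hwt a h) _
  have hprodpos : 0 < ∏ a, t a ^ w a := Finset.prod_pos fun a _ => hpos a
  have hlogprod : Real.log (∏ a, t a ^ w a) = ∑ a, w a * Real.log (t a) := by
    rw [Real.log_prod (fun a _ => ne_of_gt (hpos a))]
    apply Finset.sum_congr rfl
    intro a _
    rcases eq_or_lt_of_le (hw a) with h | h
    · rw [← h, Real.rpow_zero, Real.log_one, zero_mul]
    · rw [Real.log_rpow (hwt a h)]
  calc ∑ a, w a * Real.log (t a) = Real.log (∏ a, t a ^ w a) := hlogprod.symm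
    _ ≤ Real.log (∑ a, w a * t a) := Real.log_le_log hprodpos hamgm

/-- The divergence-based (GKLD) Lee–Seung multiplicative update for `H` (with
column-normalized `W`) does not increase the generalized Kullback–Leibler
divergence `KL(X; WH)`. -/
theorem gkld_H_update_decreases_KL
    {m n r : ℕ}
    (X : Matrix (Fin m) (Fin n) ℝ) (W : Matrix (Fin m) (Fin r) ℝ)
    (H Hplus : Matrix (Fin r) (Fin n) ℝ)
    (hX : ∀ i j, 0 < X i j) (hW : ∀ i a, 0 ≤ W i a)
    (hWnorm : ∀ a, ∑ i, W i a = 1) (hH : ∀ a j, 0 ≤ H a j)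
    (hWH : ∀ i j, 0 < (W * H) i j)
    (hHplus : ∀ a j, Hplus a j = H a j * ∑ i, W i a * X i j / (W * H) i j)
    (hWHplus : ∀ i j, 0 < (W * Hplus) i j) :
    ∑ i, ∑ j, (X i j * Real.log (X i j / (W * Hplus) i j)
        - X i j + (W * Hplus) i j)
      ≤ ∑ i, ∑ j, (X i j * Real.log (X i j / (W * H) i j)
        - X i j + (W * H) i j) := by
  -- Nonnegativity of Hplus
  have hHplus_nonneg : ∀ a j, 0 ≤ Hplus a j := by
    intro a j
    rw [hHplus a j]
    apply mul_nonneg (hH a j)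
    apply Finset.sum_nonneg
    intro i _
    exact div_nonneg (mul_nonneg (hW i a) (hX i j).le) (hWH i j).le
  -- If H a j = 0 then Hplus a j = 0
  have hHzero : ∀ a j, H a j = 0 → Hplus a j = 0 := by
    intro a j h; rw [hHplus a j, h, zero_mul]
  -- Key per-(i,j) Jensen inequality
  have key : ∀ i j,
      X i j * (Real.log ((W * H) i j) - Real.log ((W * Hplus) i j))
        ≤ ∑ a, -(X i j * (W i a * H a j / (W * H) i j)
            * Real.log (Hplus a j / H a j)) := by
    intro i j
    set s := (W * H) i j with hs
    have hspos : 0 < s := hWH i j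
    set w : Fin r → ℝ := fun a => W i a * H a j / s with hwdef
    set t : Fin r → ℝ := fun a => Hplus a j / H a j with htdef
    have hwnn : ∀ a, 0 ≤ w a := fun a =>
      div_nonneg (mul_nonneg (hW i a) (hH a j)) hspos.le
    have hw1 : ∑ a, w a = 1 := by
      rw [← Finset.sum_div]
      rw [div_eq_one_iff_eq hspos.ne']
      rw [hs, Matrix.mul_apply]
    have htnn : ∀ a, 0 ≤ t a := fun a =>
      div_nonneg (hHplus_nonneg a j) (hH a j)
    have hwt : ∀ a, 0 < w a → 0 < t a := by
      intro a hwa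
      have hWH' : 0 < W i a * H a j := by
        by_contra hc
        push_neg at hc
        have : w a ≤ 0 := div_nonpos_of_nonpos_of_nonneg hc hspos.le
        linarith
      have hWia : 0 < W i a := by
        rcases (hW i a).lt_or_eq with h | h
        · exact h
        · exfalso; rw [← h, zero_mul] at hWH'; exact lt_irrefl 0 hWH'
      have hHaj : 0 < H a j := by
        rcases (hH a j).lt_or_eq with h | h
        · exact h
        · exfalso; rw [← h, mul_zero] at hWH'; exact lt_irrefl 0 hWH'
      have hplus_pos : 0 < Hplus a j := by
        rw [hHplus a j]
        apply mul_pos hHaj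
        have hterm : 0 < W i a * X i j / (W * H) i j :=
          div_pos (mul_pos hWia (hX i j)) (hWH i j)
        calc (0:ℝ) < W i a * X i j / (W * H) i j := hterm
          _ ≤ ∑ i', W i' a * X i' j / (W * H) i' j := by
            apply Finset.single_le_sum (f := fun i' => W i' a * X i' j / (W * H) i' j)
              (fun i' _ => div_nonneg (mul_nonneg (hW i' a) (hX i' j).le) (hWH i' j).le)
              (Finset.mem_univ i)
      exact div_pos hplus_pos hHaj
    have hsum_wt : ∑ a, w a * t a = (W * Hplus) i j / s := by
      rw [Matrix.mul_apply, Finset.sum_div]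
      apply Finset.sum_congr rfl
      intro a _
      rcases (hH a j).lt_or_eq with h | h
      · field_simp [hwdef, htdef]
        simp only [hwdef, htdef]; field_simp
      · simp only [hwdef, htdef, ← h, hHzero a j h.symm]
        simp
    have hjen := jensen_log w t hwnn hw1 htnn hwt
    rw [hsum_wt] at hjen
    have hlog : Real.log ((W * Hplus) i j / s)
        = Real.log ((W * Hplus) i j) - Real.log s :=
      Real.log_div (hWHplus i j).ne' hspos.ne'
    rw [hlog] at hjen
    have hXnn := (hX i j).le
    have := mul_le_mul_of_nonneg_left hjen hXnn
    calc X i j * (Real.log s - Real.log ((W * Hplus) i j))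
        = -(X i j * (Real.log ((W * Hplus) i j) - Real.log s)) := by ring
      _ ≤ -(X i j * ∑ a, w a * Real.log (t a)) := by linarith
      _ = ∑ a, -(X i j * w a * Real.log (t a)) := by
          rw [Finset.mul_sum, ← Finset.sum_neg_distrib]
          apply Finset.sum_congr rfl
          intro a _; ring
      _ = ∑ a, -(X i j * (W i a * H a j / s) * Real.log (Hplus a j / H a j)) := rfl
  -- Sum identity: ∑_i X_{ij} W_{ia} H_{aj}/s_{ij} = Hplus a j
  have hcol : ∀ a j, ∑ i, X i j * (W i a * H a j / (W * H) i j) = Hplus a j := by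
    intro a j
    rw [hHplus a j, Finset.mul_sum]
    apply Finset.sum_congr rfl
    intro i _
    field_simp
  -- Per-(a,j) final inequality
  have hfinal : ∀ a j,
      -(Hplus a j * Real.log (Hplus a j / H a j)) + (Hplus a j - H a j) ≤ 0 := by
    intro a j
    rcases (hH a j).lt_or_eq with hHpos | hHz
    · rcases (hHplus_nonneg a j).lt_or_eq with hPpos | hPz
      · have hlog := Real.log_le_sub_one_of_pos (div_pos hHpos hPpos)
        have h1 : Real.log (H a j / Hplus a j) = - Real.log (Hplus a j / H a j) := by
          rw [← Real.log_inv]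
          congr 1
          field_simp
        rw [h1, div_sub_one hPpos.ne'] at hlog
        have := mul_le_mul_of_nonneg_left hlog hPpos.le
        rw [mul_div_cancel₀ _ hPpos.ne'] at this
        linarith
      · rw [← hPz]
        simp
        linarith
    · rw [hHzero a j hHz.symm, ← hHz]
      simp
  -- Combine everything
  rw [← sub_nonneg]
  have hA : ∑ i, ∑ j, (X i j * Real.log (X i j / (W * H) i j) - X i j + (W * H) i j)
      - ∑ i, ∑ j, (X i j * Real.log (X i j / (W * Hplus) i j) - X i j + (W * Hplus) i j)
      = -(∑ i, ∑ j, (X i j * (Real.log ((W * H) i j) - Real.log ((W * Hplus) i j))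
          + ((W * Hplus) i j - (W * H) i j))) := by
    rw [← Finset.sum_sub_distrib, ← Finset.sum_neg_distrib]
    apply Finset.sum_congr rfl
    intro i _
    rw [← Finset.sum_sub_distrib, ← Finset.sum_neg_distrib]
    apply Finset.sum_congr rfl
    intro j _
    rw [Real.log_div (hX i j).ne' (hWH i j).ne',
        Real.log_div (hX i j).ne' (hWHplus i j).ne']
    ring
  rw [hA, neg_nonneg]
  -- Show the middle sum ≤ 0
  have step1 : ∑ i, ∑ j, (X i j * (Real.log ((W * H) i j) - Real.log ((W * Hplus) i j))
          + ((W * Hplus) i j - (W * H) i j))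
      ≤ ∑ i, ∑ j, ((∑ a, -(X i j * (W i a * H a j / (W * H) i j)
            * Real.log (Hplus a j / H a j)))
          + ((W * Hplus) i j - (W * H) i j)) := by
    apply Finset.sum_le_sum; intro i _
    apply Finset.sum_le_sum; intro j _
    linarith [key i j]
  have step2 : ∑ i, ∑ j, ((∑ a, -(X i j * (W i a * H a j / (W * H) i j)
            * Real.log (Hplus a j / H a j)))
          + ((W * Hplus) i j - (W * H) i j))
      = ∑ a, ∑ j, (-(Hplus a j * Real.log (Hplus a j / H a j))
          + (Hplus a j - H a j)) := by
    have part1 : ∑ i, ∑ j, ∑ a, -(X i j * (W i a * H a j / (W * H) i j)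
            * Real.log (Hplus a j / H a j))
        = ∑ a, ∑ j, -(Hplus a j * Real.log (Hplus a j / H a j)) := by
      calc ∑ i, ∑ j, ∑ a, -(X i j * (W i a * H a j / (W * H) i j)
              * Real.log (Hplus a j / H a j))
          = ∑ j, ∑ i, ∑ a, -(X i j * (W i a * H a j / (W * H) i j)
              * Real.log (Hplus a j / H a j)) := Finset.sum_comm
        _ = ∑ j, ∑ a, ∑ i, -(X i j * (W i a * H a j / (W * H) i j)
              * Real.log (Hplus a j / H a j)) :=
            Finset.sum_congr rfl (fun j _ => Finset.sum_comm)
        _ = ∑ a, ∑ j, ∑ i, -(X i j * (W i a * H a j / (W * H) i j)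
              * Real.log (Hplus a j / H a j)) := Finset.sum_comm
        _ = ∑ a, ∑ j, -(Hplus a j * Real.log (Hplus a j / H a j)) := by
            apply Finset.sum_congr rfl; intro a _
            apply Finset.sum_congr rfl; intro j _
            rw [Finset.sum_neg_distrib, ← Finset.sum_mul, hcol a j]
    have part2 : ∑ i, ∑ j, ((W * Hplus) i j - (W * H) i j)
        = ∑ a, ∑ j, (Hplus a j - H a j) := by
      have hinner : ∀ i j, (W * Hplus) i j - (W * H) i j
          = ∑ a, W i a * (Hplus a j - H a j) := by
        intro i j
        rw [Matrix.mul_apply, Matrix.mul_apply, ← Finset.sum_sub_distrib]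
        apply Finset.sum_congr rfl; intro a _; ring
      calc ∑ i, ∑ j, ((W * Hplus) i j - (W * H) i j)
          = ∑ i, ∑ j, ∑ a, W i a * (Hplus a j - H a j) := by
            apply Finset.sum_congr rfl; intro i _
            apply Finset.sum_congr rfl; intro j _
            exact hinner i j
        _ = ∑ j, ∑ i, ∑ a, W i a * (Hplus a j - H a j) := Finset.sum_comm
        _ = ∑ j, ∑ a, ∑ i, W i a * (Hplus a j - H a j) :=
            Finset.sum_congr rfl (fun j _ => Finset.sum_comm)
        _ = ∑ a, ∑ j, ∑ i, W i a * (Hplus a j - H a j) := Finset.sum_comm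
        _ = ∑ a, ∑ j, (Hplus a j - H a j) := by
            apply Finset.sum_congr rfl; intro a _
            apply Finset.sum_congr rfl; intro j _
            rw [← Finset.sum_mul, hWnorm a, one_mul]
    calc ∑ i, ∑ j, ((∑ a, -(X i j * (W i a * H a j / (W * H) i j)
            * Real.log (Hplus a j / H a j)))
          + ((W * Hplus) i j - (W * H) i j))
        = (∑ i, ∑ j, ∑ a, -(X i j * (W i a * H a j / (W * H) i j)
            * Real.log (Hplus a j / H a j)))
          + ∑ i, ∑ j, ((W * Hplus) i j - (W * H) i j) := by
          rw [← Finset.sum_add_distrib]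
          apply Finset.sum_congr rfl; intro i _
          rw [← Finset.sum_add_distrib]
      _ = (∑ a, ∑ j, -(Hplus a j * Real.log (Hplus a j / H a j)))
          + ∑ a, ∑ j, (Hplus a j - H a j) := by rw [part1, part2]
      _ = ∑ a, ∑ j, (-(Hplus a j * Real.log (Hplus a j / H a j))
          + (Hplus a j - H a j)) := by
          rw [← Finset.sum_add_distrib]
          apply Finset.sum_congr rfl; intro a _
          rw [← Finset.sum_add_distrib]
  calc ∑ i, ∑ j, (X i j * (Real.log ((W * H) i j) - Real.log ((W * Hplus) i j))
          + ((W * Hplus) i j - (W * H) i j))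
      ≤ ∑ a, ∑ j, (-(Hplus a j * Real.log (Hplus a j / H a j))
          + (Hplus a j - H a j)) := step2 ▸ step1
    _ ≤ 0 := Finset.sum_nonpos (fun a _ => Finset.sum_nonpos (fun j _ => hfinal a j))
end
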